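/- (Elliptical potential lemma, Lemma C.1) For any sequence of vectors {a_t} ⊆ {a ∈ ℝ^d : ‖a‖ ≤ 1} and V_t := I + Σ_{s<t} a_s a_sᵀ, for every t: Σ_{s≤t} ‖a_s‖²_{V_s^{-1}} ≤ 2d log(1 + t/d) and Σ_{s≤t} ‖a_s‖_{V_s^{-1}} ≤ √(2 d t log(1 + t/d)). Furthermore, for all t and δ ∈ (0,1], ω_t(δ) ≤ 1 + √(½ log((m+1)/δ) + (d/2) log(1 + t/d)). -/

import Mathlib

open Finset
open scoped Matrix

/-- Weighted norm `‖v‖_M = ‖M^{1/2} v‖ = √(vᵀ M v)` for a positive-semidefinite matrix `M`. -/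
noncomputable def wnorm {d : ℕ} (M : Matrix (Fin d) (Fin d) ℝ) (v : Fin d → ℝ) : ℝ :=
  Real.sqrt (v ⬝ᵥ M.mulVec v)

/-- `V_t = I + ∑_{s < t} a_s a_sᵀ` (rounds indexed from `1`). -/
noncomputable def Vmat {d : ℕ} (a : ℕ → Fin d → ℝ) (t : ℕ) : Matrix (Fin d) (Fin d) ℝ :=
  1 + ∑ s ∈ Finset.Ico 1 t, Matrix.vecMulVec (a s) (a s)

/-- The confidence radius `ω_t(δ) = 1 + √(½ log((m+1)/δ) + ¼ log det V_t)`. -/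
noncomputable def omrad (m : ℕ) (δ : ℝ) {d : ℕ} (V : Matrix (Fin d) (Fin d) ℝ) : ℝ :=
  1 + Real.sqrt ((1 / 2) * Real.log ((m + 1) / δ) + (1 / 4) * Real.log V.det)

section Aux

variable {d : ℕ}

lemma dot_vecMulVec (v x : Fin d → ℝ) :
    x ⬝ᵥ ((Matrix.vecMulVec v v) *ᵥ x) = (v ⬝ᵥ x) ^ 2 := by
  simp only [dotProduct, Matrix.mulVec, Matrix.vecMulVec_apply]
  rw [sq, Finset.sum_mul_sum]
  refine Finset.sum_congr rfl fun i _ => ?_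
  rw [Finset.mul_sum]
  exact Finset.sum_congr rfl fun j _ => by ring

lemma vecMulVec_posSemidef (v : Fin d → ℝ) : (Matrix.vecMulVec v v).PosSemidef := by
  refine Matrix.PosSemidef.of_dotProduct_mulVec_nonneg ?_ ?_
  · ext i j
    simp [Matrix.conjTranspose_apply, Matrix.vecMulVec_apply, mul_comm]
  · intro x
    simpa [dot_vecMulVec] using sq_nonneg (v ⬝ᵥ x)

lemma sum_vecMulVec_posSemidef (a : ℕ → Fin d → ℝ) (s : Finset ℕ) :
    (∑ i ∈ s, Matrix.vecMulVec (a i) (a i)).PosSemidef :=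
  Finset.sum_induction _ _ (fun _ _ => Matrix.PosSemidef.add) Matrix.PosSemidef.zero
    (fun i _ => vecMulVec_posSemidef (a i))

lemma Vmat_posDef (a : ℕ → Fin d → ℝ) (t : ℕ) : (Vmat a t).PosDef :=
  Matrix.PosDef.add_posSemidef Matrix.PosDef.one (sum_vecMulVec_posSemidef a _)

lemma Vmat_det_pos (a : ℕ → Fin d → ℝ) (t : ℕ) : 0 < (Vmat a t).det :=
  (Vmat_posDef a t).det_pos

lemma Vmat_det_succ (a : ℕ → Fin d → ℝ) (t : ℕ) (ht : 1 ≤ t) :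
    (Vmat a (t+1)).det = (Vmat a t).det * (1 + a t ⬝ᵥ (Vmat a t)⁻¹ *ᵥ a t) := by
  have hsplit : Vmat a (t+1) = Vmat a t + Matrix.vecMulVec (a t) (a t) := by
    rw [Vmat, Finset.sum_Ico_succ_top ht, Vmat, add_assoc]
  have hU : IsUnit (Vmat a t).det := (Vmat_det_pos a t).ne'.isUnit
  rw [hsplit, Matrix.vecMulVec_eq (Fin 1), Matrix.det_add_replicateCol_mul_replicateRow hU]
  congr 1
  simp only [Matrix.det_unique, Matrix.add_apply, Matrix.one_apply_eq]
  congr 1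
  rw [← Matrix.replicateRow_vecMul, Matrix.replicateRow_mul_replicateCol_apply, ← Matrix.dotProduct_mulVec]

lemma x_nonneg (a : ℕ → Fin d → ℝ) (t : ℕ) : 0 ≤ a t ⬝ᵥ (Vmat a t)⁻¹ *ᵥ a t := by
  simpa [star_trivial] using ((Vmat_posDef a t).inv.posSemidef).dotProduct_mulVec_nonneg (a t)

lemma x_le_one (a : ℕ → Fin d → ℝ) (ha : ∀ s, Real.sqrt (∑ i, a s i ^ 2) ≤ 1) (t : ℕ) :
    a t ⬝ᵥ (Vmat a t)⁻¹ *ᵥ a t ≤ 1 := by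
  set V := Vmat a t with hV
  have hpd := Vmat_posDef a t
  set b := V⁻¹ *ᵥ a t with hb
  have hVb : V *ᵥ b = a t := by
    rw [hb, Matrix.mulVec_mulVec, Matrix.mul_nonsing_inv _ (Vmat_det_pos a t).ne'.isUnit,
      Matrix.one_mulVec]
  have hx0 : 0 ≤ a t ⬝ᵥ b := by
    simpa [star_trivial] using (hpd.inv.posSemidef).dotProduct_mulVec_nonneg (a t)
  have hbb : b ⬝ᵥ b ≤ a t ⬝ᵥ b := by
    have h := (sum_vecMulVec_posSemidef a (Finset.Ico 1 t)).dotProduct_mulVec_nonneg b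
    simp only [star_trivial] at h
    have h2 : V *ᵥ b = b + (∑ s ∈ Finset.Ico 1 t, Matrix.vecMulVec (a s) (a s)) *ᵥ b := by
      rw [hV, Vmat, Matrix.add_mulVec, Matrix.one_mulVec]
    have h3 : a t ⬝ᵥ b = b ⬝ᵥ b + ((∑ s ∈ Finset.Ico 1 t, Matrix.vecMulVec (a s) (a s)) *ᵥ b) ⬝ᵥ b := by
      nth_rewrite 1 [← hVb]
      rw [h2, add_dotProduct]
    have h4 : 0 ≤ ((∑ s ∈ Finset.Ico 1 t, Matrix.vecMulVec (a s) (a s)) *ᵥ b) ⬝ᵥ b := by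
      rw [dotProduct_comm]; exact h
    linarith
  have haa : a t ⬝ᵥ a t ≤ 1 := by
    have h := ha t
    have hnn : (0:ℝ) ≤ ∑ i, a t i ^ 2 := Finset.sum_nonneg fun i _ => sq_nonneg _
    have : a t ⬝ᵥ a t = ∑ i, a t i ^ 2 := by
      simp [dotProduct, sq]
    nlinarith [Real.sq_sqrt hnn, Real.sqrt_nonneg (∑ i, a t i ^ 2)]
  have hcs : (a t ⬝ᵥ b) ^ 2 ≤ (a t ⬝ᵥ a t) * (b ⬝ᵥ b) := by
    simpa [dotProduct, sq] using
      Finset.sum_mul_sq_le_sq_mul_sq Finset.univ (a t) b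
  have hbb0 : 0 ≤ b ⬝ᵥ b := by
    simp only [dotProduct]
    exact Finset.sum_nonneg fun i _ => mul_self_nonneg _
  rcases eq_or_lt_of_le hx0 with h | h
  · rw [← h]; norm_num
  · nlinarith [mul_le_of_le_one_left hbb0 haa]

lemma half_log_ineq (x : ℝ) (h0 : 0 ≤ x) (h1 : x ≤ 1) : x ≤ 2 * Real.log (1 + x) := by
  have hpos : (0:ℝ) < 1 + x := by linarith
  have h := Real.log_le_sub_one_of_pos (x := (1+x)⁻¹) (by positivity)
  rw [Real.log_inv] at h
  have hlow : 1 - (1+x)⁻¹ ≤ Real.log (1+x) := by linarith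
  have hinv : (1+x)⁻¹ ≤ 1 - x/2 := by
    rw [inv_le_iff_one_le_mul₀ hpos]
    nlinarith
  linarith

lemma det_le_trace_pow (hd : 0 < d) (M : Matrix (Fin d) (Fin d) ℝ) (hM : M.PosSemidef) :
    M.det ≤ (M.trace / d) ^ d := by
  have hH := hM.isHermitian
  have hev : ∀ i, 0 ≤ hH.eigenvalues i := hM.eigenvalues_nonneg
  have hdet : M.det = ∏ i, hH.eigenvalues i := by
    simpa using hH.det_eq_prod_eigenvalues
  have htr : M.trace = ∑ i, hH.eigenvalues i := by
    simpa using hH.trace_eq_sum_eigenvalues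
  rw [hdet, htr]
  set z := hH.eigenvalues
  have hd' : (0:ℝ) < d := Nat.cast_pos.mpr hd
  have key := Real.geom_mean_le_arith_mean_weighted Finset.univ (fun _ => 1 / d) z
    (fun i _ => by positivity) (by simp [Finset.card_univ]; field_simp) (fun i _ => hev i)
  have h1 : ∏ i, z i = (∏ i, z i ^ (1 / (d:ℝ))) ^ (d:ℕ) := by
    rw [← Finset.prod_pow]
    refine Finset.prod_congr rfl fun i _ => ?_
    rw [← Real.rpow_natCast (z i ^ (1 / (d:ℝ))) d, ← Real.rpow_mul (hev i)]
    field_simp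
    simp
  rw [h1]
  have h2 : ∑ i, (1 / (d:ℝ)) * z i = (∑ i, z i) / d := by
    rw [Finset.sum_div]
    exact Finset.sum_congr rfl fun i _ => by ring
  rw [h2] at key
  exact pow_le_pow_left₀ (Finset.prod_nonneg fun i _ => Real.rpow_nonneg (hev i) _) key d

lemma Vmat_trace (a : ℕ → Fin d → ℝ) (t : ℕ) :
    (Vmat a t).trace = d + ∑ s ∈ Finset.Ico 1 t, (a s ⬝ᵥ a s) := by
  rw [Vmat, Matrix.trace_add, Matrix.trace_one, Matrix.trace_sum]
  simp only [Fintype.card_fin]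
  refine congrArg _ (Finset.sum_congr rfl fun s _ => ?_)
  simp [Matrix.trace, Matrix.diag, Matrix.vecMulVec_apply, dotProduct]

lemma logdet_succ_le (hd : 0 < d) (a : ℕ → Fin d → ℝ)
    (ha : ∀ s, Real.sqrt (∑ i, a s i ^ 2) ≤ 1) (n : ℕ) :
    Real.log (Vmat a (n+1)).det ≤ d * Real.log (1 + (n:ℝ) / d) := by
  have hd' : (0:ℝ) < d := Nat.cast_pos.mpr hd
  have haa : ∀ s, a s ⬝ᵥ a s ≤ 1 := by
    intro s
    have h := ha s
    have hnn : (0:ℝ) ≤ ∑ i, a s i ^ 2 := Finset.sum_nonneg fun i _ => sq_nonneg _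
    have heq : a s ⬝ᵥ a s = ∑ i, a s i ^ 2 := by
      simp [dotProduct, sq]
    nlinarith [Real.sq_sqrt hnn, Real.sqrt_nonneg (∑ i, a s i ^ 2)]
  have htr : (Vmat a (n+1)).trace ≤ d + n := by
    rw [Vmat_trace]
    have : ∑ s ∈ Finset.Ico 1 (n+1), (a s ⬝ᵥ a s) ≤ ∑ s ∈ Finset.Ico 1 (n+1), (1:ℝ) :=
      Finset.sum_le_sum fun s _ => haa s
    simp only [Finset.sum_const, Nat.card_Ico, Nat.add_sub_cancel, nsmul_eq_mul, mul_one] at this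
    linarith
  have hdet := det_le_trace_pow hd _ (Vmat_posDef a (n+1)).posSemidef
  have htrd : (Vmat a (n+1)).trace / d ≤ 1 + (n:ℝ) / d := by
    rw [div_le_iff₀ hd']
    calc (Vmat a (n+1)).trace ≤ (d:ℝ) + n := htr
      _ = (1 + (n:ℝ)/d) * d := by field_simp
  have htrd0 : 0 ≤ (Vmat a (n+1)).trace / d := by
    rw [Vmat_trace]
    have : 0 ≤ ∑ s ∈ Finset.Ico 1 (n+1), (a s ⬝ᵥ a s) :=
      Finset.sum_nonneg fun s _ => by
        simp only [dotProduct]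
        exact Finset.sum_nonneg fun i _ => mul_self_nonneg _
    positivity
  have hdet2 : (Vmat a (n+1)).det ≤ (1 + (n:ℝ)/d) ^ d :=
    hdet.trans (pow_le_pow_left₀ htrd0 htrd d)
  calc Real.log (Vmat a (n+1)).det ≤ Real.log ((1 + (n:ℝ)/d) ^ d) :=
        Real.log_le_log (Vmat_det_pos a (n+1)) hdet2
    _ = d * Real.log (1 + (n:ℝ)/d) := by rw [Real.log_pow]

lemma logdet_le (hd : 0 < d) (a : ℕ → Fin d → ℝ)
    (ha : ∀ s, Real.sqrt (∑ i, a s i ^ 2) ≤ 1) (t : ℕ) :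
    Real.log (Vmat a t).det ≤ d * Real.log (1 + (t:ℝ) / d) := by
  have hd' : (0:ℝ) < d := Nat.cast_pos.mpr hd
  cases t with
  | zero => simp [Vmat]
  | succ n =>
      refine (logdet_succ_le hd a ha n).trans ?_
      have h1 : (0:ℝ) < 1 + (n:ℝ)/d := by positivity
      have h2 : 1 + (n:ℝ)/d ≤ 1 + ((n:ℝ)+1)/d := by
        gcongr
        linarith
      have := Real.log_le_log h1 h2
      have hdn : (0:ℝ) ≤ d := le_of_lt hd'
      push_cast
      nlinarith

lemma telescope (a : ℕ → Fin d → ℝ) (t : ℕ) :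
    ∑ s ∈ Finset.Icc 1 t, Real.log (1 + a s ⬝ᵥ (Vmat a s)⁻¹ *ᵥ a s)
      = Real.log (Vmat a (t+1)).det := by
  induction t with
  | zero => simp [Vmat]
  | succ n ih =>
      rw [Finset.sum_Icc_succ_top (by omega : 1 ≤ n+1), ih,
        Vmat_det_succ a (n+1) (by omega),
        Real.log_mul (Vmat_det_pos a (n+1)).ne'
          (by nlinarith [x_nonneg a (n+1)])]

end Aux

/-- **Elliptical potential lemma** (Lemma C.1): for any sequence of unit-norm-bounded
vectors `a_t` and `V_t := I + ∑_{s<t} a_s a_sᵀ`, the squared weighted norms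
`‖a_s‖²_{V_s⁻¹}` sum to at most `2 d log(1 + t/d)`, the weighted norms sum to at most
`√(2 d t log(1 + t/d))`, and `ω_t(δ) ≤ 1 + √(½ log((m+1)/δ) + (d/2) log(1 + t/d))`. -/
theorem elliptical_potential (d m : ℕ) (hd : 0 < d) (hm : 1 ≤ m)
    (a : ℕ → Fin d → ℝ) (ha : ∀ s, Real.sqrt (∑ i, a s i ^ 2) ≤ 1) (t : ℕ) :
    (∑ s ∈ Finset.Icc 1 t, (wnorm (Vmat a s)⁻¹ (a s)) ^ 2
        ≤ 2 * d * Real.log (1 + (t : ℝ) / d))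
    ∧ (∑ s ∈ Finset.Icc 1 t, wnorm (Vmat a s)⁻¹ (a s)
        ≤ Real.sqrt (2 * d * t * Real.log (1 + (t : ℝ) / d)))
    ∧ ∀ δ : ℝ, δ ∈ Set.Ioc (0 : ℝ) 1 →
        omrad m δ (Vmat a t)
          ≤ 1 + Real.sqrt ((1 / 2) * Real.log ((m + 1) / δ)
              + ((d : ℝ) / 2) * Real.log (1 + (t : ℝ) / d)) := by
  have hd' : (0:ℝ) < d := Nat.cast_pos.mpr hd
  set x : ℕ → ℝ := fun s => a s ⬝ᵥ (Vmat a s)⁻¹ *ᵥ a s with hx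
  have hw2 : ∀ s, (wnorm (Vmat a s)⁻¹ (a s)) ^ 2 = x s := fun s => by
    rw [wnorm, Real.sq_sqrt (x_nonneg a s)]
  have hw : ∀ s, wnorm (Vmat a s)⁻¹ (a s) = Real.sqrt (x s) := fun s => rfl
  have hL0 : 0 ≤ Real.log (1 + (t:ℝ)/d) := by
    apply Real.log_nonneg
    have : (0:ℝ) ≤ (t:ℝ)/d := by positivity
    linarith
  -- Part 1
  have part1 : ∑ s ∈ Finset.Icc 1 t, (wnorm (Vmat a s)⁻¹ (a s)) ^ 2
      ≤ 2 * d * Real.log (1 + (t : ℝ) / d) := by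
    calc ∑ s ∈ Finset.Icc 1 t, (wnorm (Vmat a s)⁻¹ (a s)) ^ 2
        = ∑ s ∈ Finset.Icc 1 t, x s := Finset.sum_congr rfl fun s _ => hw2 s
      _ ≤ ∑ s ∈ Finset.Icc 1 t, 2 * Real.log (1 + x s) :=
          Finset.sum_le_sum fun s _ => half_log_ineq (x s) (x_nonneg a s) (x_le_one a ha s)
      _ = 2 * Real.log (Vmat a (t+1)).det := by
          rw [← Finset.mul_sum, telescope a t]
      _ ≤ 2 * (d * Real.log (1 + (t:ℝ)/d)) := by
          have := logdet_succ_le hd a ha t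
          linarith
      _ = 2 * d * Real.log (1 + (t:ℝ)/d) := by ring
  refine ⟨part1, ?_, ?_⟩
  -- Part 2
  · have hsum0 : 0 ≤ ∑ s ∈ Finset.Icc 1 t, x s := Finset.sum_nonneg fun s _ => x_nonneg a s
    have hcs : ∑ s ∈ Finset.Icc 1 t, Real.sqrt (x s)
        ≤ Real.sqrt (t : ℝ) * Real.sqrt (∑ s ∈ Finset.Icc 1 t, x s) := by
      have h := Real.sum_sqrt_mul_sqrt_le (Finset.Icc 1 t)
        (f := fun _ => (1:ℝ)) (g := fun s => x s) (fun _ => zero_le_one) (fun s => x_nonneg a s)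
      simpa [Nat.card_Icc] using h
    have hsum : ∑ s ∈ Finset.Icc 1 t, x s ≤ 2 * d * Real.log (1 + (t:ℝ)/d) := by
      calc ∑ s ∈ Finset.Icc 1 t, x s
          = ∑ s ∈ Finset.Icc 1 t, (wnorm (Vmat a s)⁻¹ (a s)) ^ 2 :=
            (Finset.sum_congr rfl fun s _ => (hw2 s).symm)
        _ ≤ _ := part1
    calc ∑ s ∈ Finset.Icc 1 t, wnorm (Vmat a s)⁻¹ (a s)
        = ∑ s ∈ Finset.Icc 1 t, Real.sqrt (x s) := Finset.sum_congr rfl fun s _ => hw s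
      _ ≤ Real.sqrt (t : ℝ) * Real.sqrt (∑ s ∈ Finset.Icc 1 t, x s) := hcs
      _ ≤ Real.sqrt (t : ℝ) * Real.sqrt (2 * d * Real.log (1 + (t:ℝ)/d)) := by
          gcongr
      _ = Real.sqrt ((t : ℝ) * (2 * d * Real.log (1 + (t:ℝ)/d))) :=
          (Real.sqrt_mul (Nat.cast_nonneg t) _).symm
      _ = Real.sqrt (2 * d * t * Real.log (1 + (t:ℝ)/d)) := by
          congr 1
          ring
  -- Part 3
  · intro δ hδ
    rw [omrad]
    have hsq : Real.sqrt ((1/2) * Real.log (((m:ℝ) + 1)/δ) + (1/4) * Real.log (Vmat a t).det)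
        ≤ Real.sqrt ((1/2) * Real.log (((m:ℝ) + 1)/δ) + (d:ℝ)/2 * Real.log (1 + (t:ℝ)/d)) := by
      apply Real.sqrt_le_sqrt
      have hlog := logdet_le hd a ha t
      nlinarith [mul_nonneg (le_of_lt hd') hL0]
    linarith
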